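/- Let X be a compact Hausdorff space equipped with an expansive continuous action of a group G, and let U₀ be a closed expansiveness entourage for (X,G). Then for all x, y ∈ X the following are equivalent: (a) x and y are homoclinic; (b) there exists a finite subset Ω₀ ⊂ G such that (g·x, g·y) ∈ U₀ for all g ∈ G ∖ Ω₀. -/

import Mathlib

open scoped Uniformity

/-- Two points are homoclinic if their orbits are asymptotically close. -/
def Homoclinic (G : Type*) {X : Type*} [SMul G X] [UniformSpace X] (x y : X) : Prop :=
  ∀ U ∈ 𝓤 X, ∃ Ω : Finset G, ∀ g : G, g ∉ Ω → (g • x, g • y) ∈ U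

/-- For an expansive continuous action on a compact Hausdorff space with closed
expansiveness entourage `U₀`, two points `x, y` are homoclinic if and only if
`(g•x, g•y) ∈ U₀` for all `g` outside a finite subset `Ω₀ ⊆ G`. -/
theorem homoclinic_iff_expansiveness_entourage {G X : Type*} [Group G]
    [UniformSpace X] [CompactSpace X] [T2Space X] [MulAction G X]
    (hcont : ∀ g : G, Continuous fun x : X => g • x)
    (U₀ : Set (X × X)) (hU₀ : U₀ ∈ 𝓤 X) (hU₀closed : IsClosed U₀)
    (hexp : ∀ x y : X, x ≠ y → ∃ g : G, (g • x, g • y) ∉ U₀)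
    (x y : X) :
    Homoclinic G x y ↔ ∃ Ω₀ : Finset G, ∀ g : G, g ∉ Ω₀ → (g • x, g • y) ∈ U₀ := by
  constructor
  · intro h
    exact h U₀ hU₀
  · rintro ⟨Ω₀, hΩ₀⟩ U hU
    by_contra hc
    push_neg at hc
    -- The bad set S is infinite
    set S : Set G := {g | (g • x, g • y) ∉ U} with hS
    have hSinf : S.Infinite := by
      intro hfin
      obtain ⟨g, hg1, hg2⟩ := hc hfin.toFinset
      exact hg2 (by_contra fun hgU => hg1 (hfin.mem_toFinset.mpr hgU))
    have hne : (Filter.cofinite ⊓ Filter.principal S).NeBot := by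
      rw [Filter.inf_principal_neBot_iff]
      intro V hV
      exact ((hSinf.diff (Filter.eventually_cofinite.mp hV)).nonempty).imp
        fun g hg => ⟨not_not.mp hg.2, hg.1⟩
    let F : Ultrafilter G := Ultrafilter.of (Filter.cofinite ⊓ Filter.principal S)
    have hFle : (F : Filter G) ≤ Filter.cofinite ⊓ Filter.principal S :=
      Ultrafilter.of_le _
    have hFS : S ∈ F := hFle (inf_le_right (a := Filter.cofinite) (Filter.mem_principal_self S))
    have hFcof : (F : Filter G) ≤ Filter.cofinite := hFle.trans inf_le_left
    -- the orbit map
    let φ : G → X × X := fun g => (g • x, g • y)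
    obtain ⟨⟨a, b⟩, -, hab⟩ :=
      isCompact_univ.ultrafilter_le_nhds (F.map φ)
        (by simp [Filter.le_principal_iff])
    have htend : Filter.Tendsto φ (F : Filter G) (nhds (a, b)) := hab
    by_cases heq : a = b
    · -- limit on the diagonal: eventually inside U, contradiction
      subst heq
      have hint : interior U ∈ 𝓤 X := by
        rcases interior_mem_uniformity hU with h'
        exact h'
      have hmem : interior U ∈ nhds (a, a) :=
        isOpen_interior.mem_nhds (refl_mem_uniformity hint)
      have : {g | φ g ∈ interior U} ∈ F := htend hmem
      obtain ⟨g, hg1, hg2⟩ := Filter.nonempty_of_mem (Filter.inter_mem this hFS)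
      exact hg2 (interior_subset hg1)
    · -- limit off the diagonal: use expansiveness
      classical
      obtain ⟨h, hh⟩ := hexp a b heq
      have hcont2 : Continuous fun p : X × X => (h • p.1, h • p.2) :=
        ((hcont h).comp continuous_fst).prodMk ((hcont h).comp continuous_snd)
      have htend2 : Filter.Tendsto (fun g => (h • (g • x), h • (g • y)))
          (F : Filter G) (nhds (h • a, h • b)) :=
        (hcont2.continuousAt.tendsto).comp htend
      have hopen : U₀ᶜ ∈ nhds (h • a, h • b) :=
        hU₀closed.isOpen_compl.mem_nhds hh
      have hT : {g : G | ((h * g) • x, (h * g) • y) ∈ U₀ᶜ} ∈ F := by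
        have h2 := htend2 hopen
        simp only [mul_smul]
        exact h2
      -- such g lie in the finite set h⁻¹ • Ω₀
      have hsub : {g : G | ((h * g) • x, (h * g) • y) ∈ U₀ᶜ} ⊆
          ↑(Ω₀.image fun k => h⁻¹ * k) := by
        intro g hg
        have : h * g ∈ Ω₀ := by_contra fun hn => hg (hΩ₀ _ hn)
        simp only [Finset.coe_image, Set.mem_image]
        exact ⟨h * g, this, by group⟩
      have hfinF : (↑(Ω₀.image fun k => h⁻¹ * k) : Set G) ∈ F :=
        Filter.mem_of_superset hT hsub
      have hcofin : (↑(Ω₀.image fun k => h⁻¹ * k) : Set G)ᶜ ∈ F :=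
        hFcof ((Ω₀.image fun k => h⁻¹ * k).finite_toSet.compl_mem_cofinite)
      obtain ⟨g, hg1, hg2⟩ := Filter.nonempty_of_mem (Filter.inter_mem hfinF hcofin)
      exact hg2 hg1
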